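/- Let (Y_{1,i}, Y_{2,i})_{i ≥ 1} be independent and identically distributed copies of a pair (Y1, Y2) of positive random variables whose cumulative distribution functions F1 and F2 are continuous and strictly increasing on (0, ∞) with F1(0) = F2(0) = 0. Define the estimator D_n(c) = (1/(2n))·Σ_{i=1}^{n} |F2(c·Y_{1,i}) − F1(Y_{2,i}/c)| for c > 0. Then sup_{c > 0} |D_n(c) − D(c, Y1, Y2)| → 0 almost surely as n → ∞. -/

import Mathlib

open MeasureTheory ProbabilityTheory Filter Topology
open scoped ENNReal

section AuxDefs

/-- The signed difference `F2(c·y₁) − F1(y₂/c)`. -/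
noncomputable def hfun (F1 F2 : ℝ → ℝ) (c : ℝ) (y : ℝ × ℝ) : ℝ := F2 (c * y.1) - F1 (y.2 / c)

/-- Minus the negative part of `hfun`. -/
noncomputable def gfun (F1 F2 : ℝ → ℝ) (c : ℝ) (y : ℝ × ℝ) : ℝ := -(max (-(hfun F1 F2 c y)) 0)

lemma habs_eq (F1 F2 : ℝ → ℝ) (c : ℝ) (y : ℝ × ℝ) :
    |hfun F1 F2 c y| = hfun F1 F2 c y - 2 * gfun F1 F2 c y := by
  unfold gfun
  rcases le_total 0 (hfun F1 F2 c y) with h0 | h0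
  · rw [abs_of_nonneg h0, max_eq_right (neg_nonpos.2 h0)]; ring
  · rw [abs_of_nonpos h0, max_eq_left (neg_nonneg.2 h0)]; ring

end AuxDefs

section Aux

variable {Ω : Type*} [MeasurableSpace Ω] {μ : Measure Ω} [IsProbabilityMeasure μ]

private lemma slln_aux
    (Z : ℕ → Ω → ℝ × ℝ) (hZmeas : ∀ i, Measurable (Z i))
    (hindep : iIndepFun Z μ)
    (hident : ∀ i, IdentDistrib (Z i) (Z 0) μ μ)
    (f : ℝ × ℝ → ℝ) (hf : Measurable f) (C : ℝ) (hC : ∀ y, |f y| ≤ C) :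
    ∀ᵐ ω ∂μ, Tendsto (fun n : ℕ => (∑ i ∈ Finset.range n, f (Z i ω)) / n) atTop
      (𝓝 (∫ ω, f (Z 0 ω) ∂μ)) := by
  have hmeas : ∀ i, Measurable fun ω => f (Z i ω) := fun i => hf.comp (hZmeas i)
  have hint : Integrable (fun ω => f (Z 0 ω)) μ :=
    Integrable.mono' (integrable_const C) (hmeas 0).aestronglyMeasurable
      (Filter.Eventually.of_forall fun ω => by
        simpa [Real.norm_eq_abs] using hC (Z 0 ω))
  have h := strong_law_ae (μ := μ) (fun i ω => f (Z i ω)) hint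
    (fun i j hij => (hindep.indepFun hij).comp hf hf)
    (fun i => ((hident i).comp hf))
  filter_upwards [h] with ω hω
  simpa [smul_eq_mul, inv_mul_eq_div] using hω

private lemma polya_unif
    (Z : ℕ → Ω → ℝ × ℝ) (hZmeas : ∀ i, Measurable (Z i))
    (hindep : iIndepFun Z μ)
    (hident : ∀ i, IdentDistrib (Z i) (Z 0) μ μ)
    (g : ℝ → ℝ × ℝ → ℝ) (a b : ℝ)
    (hgmeas : ∀ c, Measurable (g c))
    (hgbdd : ∀ c y, a ≤ g c y ∧ g c y ≤ b)
    (hgmono : ∀ (y : ℝ × ℝ) (c d : ℝ), 0 < c → c ≤ d → g c y ≤ g d y)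
    (m : ℝ → ℝ) (hm : ∀ c, m c = ∫ ω, g c (Z 0 ω) ∂μ)
    (hmcont : ∀ c : ℝ, 0 < c → ContinuousAt m c)
    (hm0 : Tendsto m (𝓝[>] (0:ℝ)) (𝓝 a))
    (hmtop : Tendsto m atTop (𝓝 b)) :
    ∀ᵐ ω ∂μ, ∀ ε : ℝ, 0 < ε → ∃ N : ℕ, ∀ n ≥ N, ∀ c : ℝ, 0 < c →
      |(∑ i ∈ Finset.range n, g c (Z i ω)) / n - m c| ≤ ε := by
  have hgC : ∀ c y, |g c y| ≤ max |a| |b| := fun c y =>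
    abs_le_max_abs_abs (hgbdd c y).1 (hgbdd c y).2
  have hint : ∀ c, Integrable (fun ω => g c (Z 0 ω)) μ := fun c =>
    Integrable.mono' (integrable_const (max |a| |b|))
      ((hgmeas c).comp (hZmeas 0)).aestronglyMeasurable
      (Filter.Eventually.of_forall fun ω => by
        simpa [Real.norm_eq_abs] using hgC c (Z 0 ω))
  have hma : ∀ c, a ≤ m c := by
    intro c
    rw [hm]
    have := integral_mono (integrable_const a) (hint c) (fun ω => (hgbdd c _).1)
    simpa using this
  have hmb : ∀ c, m c ≤ b := by
    intro c
    rw [hm]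
    have := integral_mono (hint c) (integrable_const b) (fun ω => (hgbdd c _).2)
    simpa using this
  have hmono : ∀ c d : ℝ, 0 < c → c ≤ d → m c ≤ m d := fun c d hc hcd => by
    rw [hm, hm]
    exact integral_mono (hint c) (hint d) fun ω => hgmono _ c d hc hcd
  have key : ∀ k : ℕ, ∀ᵐ ω ∂μ, ∃ N : ℕ, ∀ n ≥ N, ∀ c : ℝ, 0 < c →
      |(∑ i ∈ Finset.range n, g c (Z i ω)) / n - m c| ≤ 1 / ((k : ℝ) + 1) := by
    intro k
    set ε : ℝ := 1 / ((k : ℝ) + 1) with hεdef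
    have hε : 0 < ε := by positivity
    obtain ⟨c₀, hmc₀, hc₀pos⟩ : ∃ c₀ : ℝ, m c₀ < a + ε/2 ∧ 0 < c₀ := by
      have h1 : ∀ᶠ c in 𝓝[>] (0:ℝ), m c < a + ε/2 :=
        hm0.eventually_lt_const (show a < a + ε/2 by linarith)
      have h2 : ∀ᶠ c in 𝓝[>] (0:ℝ), (0:ℝ) < c := eventually_mem_nhdsWithin
      exact (h1.and h2).exists
    obtain ⟨cK, hc₀K, hmcK⟩ : ∃ cK : ℝ, c₀ ≤ cK ∧ b - ε/2 < m cK := by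
      obtain ⟨cK, h1, h2⟩ :=
        ((eventually_ge_atTop c₀).and (hmtop.eventually_const_lt (show b - ε/2 < b by linarith))).exists
      exact ⟨cK, h1, h2⟩
    have hcKpos : 0 < cK := lt_of_lt_of_le hc₀pos hc₀K
    have hUC : UniformContinuousOn m (Set.Icc c₀ cK) :=
      isCompact_Icc.uniformContinuousOn_of_continuous fun c hc =>
        (hmcont c (lt_of_lt_of_le hc₀pos hc.1)).continuousWithinAt
    rw [Metric.uniformContinuousOn_iff] at hUC
    obtain ⟨δ, hδpos, hδ⟩ := hUC (ε/2) (by positivity)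
    set η : ℝ := δ/2 with hηdef
    have hηpos : 0 < η := by positivity
    set M : ℕ := ⌈(cK - c₀)/η⌉₊ with hMdef
    set t : ℕ → ℝ := fun j => min (c₀ + j * η) cK with htdef
    have ht0 : t 0 = c₀ := by simp [htdef, min_eq_left hc₀K]
    have htmem : ∀ j, t j ∈ Set.Icc c₀ cK := by
      intro j
      refine ⟨le_min ?_ hc₀K, min_le_right _ _⟩
      have : (0:ℝ) ≤ (j:ℝ) * η := by positivity
      linarith
    have htpos : ∀ j, 0 < t j := fun j => lt_of_lt_of_le hc₀pos (htmem j).1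
    have htM : t (M+1) = cK := by
      have h1 : (cK - c₀)/η ≤ (M : ℝ) := Nat.le_ceil _
      have h2 : cK - c₀ ≤ (M : ℝ) * η := by
        calc cK - c₀ = ((cK - c₀)/η) * η := by field_simp
        _ ≤ (M : ℝ) * η := mul_le_mul_of_nonneg_right h1 hηpos.le
      apply min_eq_right
      push_cast
      nlinarith
    have htstep : ∀ j : ℕ, t j ≤ t (j+1) ∧ t (j+1) - t j ≤ η := by
      intro j
      have hcast : ((j:ℝ)+1) * η = (j:ℝ) * η + η := by ring
      constructor
      · apply min_le_min _ le_rfl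
        push_cast
        nlinarith
      · rcases le_total (c₀ + (j:ℝ)*η) cK with hle | hle
        · have e1 : t j = c₀ + (j:ℝ)*η := min_eq_left hle
          have e2 : t (j+1) ≤ c₀ + ((j:ℝ)+1)*η := by
            have := min_le_left (c₀ + ((j:ℕ)+1 : ℕ) * η) cK
            simpa [htdef] using (min_le_left (c₀ + (((j:ℝ))+1) * η) cK)
          rw [e1]
          push_cast at e2 ⊢
          nlinarith
        · have e1 : t j = cK := min_eq_right hle
          have e2 : t (j+1) = cK := by
            apply min_eq_right
            push_cast
            nlinarith
          rw [e1, e2]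
          linarith
    have hgrid : ∀ᵐ ω ∂μ, ∀ j : ℕ,
        Tendsto (fun n : ℕ => (∑ i ∈ Finset.range n, g (t j) (Z i ω)) / n)
          atTop (𝓝 (m (t j))) := by
      rw [ae_all_iff]
      intro j
      have := slln_aux Z hZmeas hindep hident (g (t j)) (hgmeas _) (max |a| |b|)
        (fun y => hgC _ y)
      rw [hm (t j)]
      exact this
    filter_upwards [hgrid] with ω hω
    have hev : ∀ᶠ n : ℕ in atTop, 1 ≤ n ∧ ∀ j ∈ Finset.range (M+2),
        |(∑ i ∈ Finset.range n, g (t j) (Z i ω)) / n - m (t j)| < ε/2 := by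
      refine (eventually_ge_atTop 1).and ?_
      rw [eventually_all_finset]
      intro j _
      have h1 := (hω j).eventually (Metric.ball_mem_nhds (m (t j)) (half_pos hε))
      filter_upwards [h1] with n hn
      simpa [Metric.mem_ball, Real.dist_eq] using hn
    obtain ⟨N, hN⟩ := eventually_atTop.1 hev
    refine ⟨N, fun n hn c hc => ?_⟩
    obtain ⟨hn1, hgridn⟩ := hN n hn
    have hnpos : (0:ℝ) < n := by exact_mod_cast hn1
    set avg : ℝ → ℝ := fun c => (∑ i ∈ Finset.range n, g c (Z i ω)) / n with havgdef
    have havgmono : ∀ c d : ℝ, 0 < c → c ≤ d → avg c ≤ avg d := by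
      intro c d h1 h2
      have hs := Finset.sum_le_sum (fun i (_ : i ∈ Finset.range n) => hgmono (Z i ω) c d h1 h2)
      simp only [havgdef, div_eq_mul_inv]
      exact mul_le_mul_of_nonneg_right hs (by positivity)
    have havga : ∀ c, a ≤ avg c := by
      intro c
      simp only [havgdef]
      rw [le_div_iff₀ hnpos]
      have hs : (∑ _i ∈ Finset.range n, a) ≤ ∑ i ∈ Finset.range n, g c (Z i ω) :=
        Finset.sum_le_sum fun i _ => (hgbdd c _).1
      simpa [Finset.sum_const, Finset.card_range, nsmul_eq_mul, mul_comm] using hs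
    have havgb : ∀ c, avg c ≤ b := by
      intro c
      simp only [havgdef]
      rw [div_le_iff₀ hnpos]
      have hs : (∑ i ∈ Finset.range n, g c (Z i ω)) ≤ ∑ _i ∈ Finset.range n, b :=
        Finset.sum_le_sum fun i _ => (hgbdd c _).2
      simpa [Finset.sum_const, Finset.card_range, nsmul_eq_mul, mul_comm] using hs
    show |avg c - m c| ≤ ε
    rcases le_total c c₀ with hcase | hcase
    · have h0 := hgridn 0 (Finset.mem_range.2 (by omega))
      rw [ht0] at h0
      have h0' := abs_lt.1 h0
      have h1 : avg c ≤ avg c₀ := havgmono c c₀ hc hcase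
      have h2 : m c ≤ m c₀ := hmono c c₀ hc hcase
      have h3 := hma c
      have h4 := havga c
      rw [abs_le]
      constructor <;> linarith [h0'.1, h0'.2]
    rcases le_total cK c with hcase2 | hcase2
    · have hK := hgridn (M+1) (Finset.mem_range.2 (by omega))
      rw [htM] at hK
      have hK' := abs_lt.1 hK
      have h1 : avg cK ≤ avg c := havgmono cK c hcKpos hcase2
      have h2 : m cK ≤ m c := hmono cK c hcKpos hcase2
      have h3 := hmb c
      have h4 := havgb c
      rw [abs_le]
      constructor <;> linarith [hK'.1, hK'.2]
    · set j : ℕ := ⌊(c - c₀)/η⌋₊ with hjdef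
      have hccnonneg : (0:ℝ) ≤ (c - c₀)/η := by
        apply div_nonneg (by linarith) hηpos.le
      have hjle : (j:ℝ) * η ≤ c - c₀ := by
        have h1 : (j:ℝ) ≤ (c - c₀)/η := Nat.floor_le hccnonneg
        calc (j:ℝ) * η ≤ ((c - c₀)/η) * η := mul_le_mul_of_nonneg_right h1 hηpos.le
        _ = c - c₀ := by field_simp
      have hjlt : c - c₀ < ((j:ℝ)+1) * η := by
        have h1 : (c - c₀)/η < (j:ℝ) + 1 := Nat.lt_floor_add_one _
        calc c - c₀ = ((c - c₀)/η) * η := by field_simp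
        _ < ((j:ℝ)+1) * η := mul_lt_mul_of_pos_right h1 hηpos
      have hjM : j ≤ M := by
        have h1 : (c - c₀)/η ≤ (cK - c₀)/η := by
          rw [div_eq_mul_inv, div_eq_mul_inv]
          exact mul_le_mul_of_nonneg_right (by linarith) (inv_nonneg.2 hηpos.le)
        exact le_trans (Nat.floor_mono h1) (Nat.floor_le_ceil _)
      have htj_le : t j ≤ c := le_trans (min_le_left _ _) (by linarith)
      have htj1_ge : c ≤ t (j+1) := by
        apply le_min _ hcase2
        push_cast
        linarith
      have hgj := abs_lt.1 (hgridn j (Finset.mem_range.2 (by omega)))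
      have hgj1 := abs_lt.1 (hgridn (j+1) (Finset.mem_range.2 (by omega)))
      have hstep : |m (t j) - m (t (j+1))| < ε/2 := by
        have hd : dist (t j) (t (j+1)) < δ := by
          rw [Real.dist_eq]
          have h1 := (htstep j).1
          have h2 := (htstep j).2
          rw [abs_of_nonpos (by linarith)]
          rw [hηdef] at h2
          linarith
        have := hδ (t j) (htmem j) (t (j+1)) (htmem (j+1)) hd
        rwa [Real.dist_eq] at this
      have hstep' := abs_lt.1 hstep
      have ha1 : avg c ≤ avg (t (j+1)) := havgmono c _ hc htj1_ge
      have ha2 : avg (t j) ≤ avg c := havgmono _ c (htpos j) htj_le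
      have hm1' : m (t j) ≤ m c := hmono _ c (htpos j) htj_le
      have hm2' : m c ≤ m (t (j+1)) := hmono c _ hc htj1_ge
      rw [abs_le]
      constructor <;> linarith [hgj.1, hgj.2, hgj1.1, hgj1.2, hstep'.1, hstep'.2]
  have all := ae_all_iff.2 key
  filter_upwards [all] with ω hω ε hε
  obtain ⟨k, hk⟩ := exists_nat_one_div_lt hε
  obtain ⟨N, hN⟩ := hω k
  exact ⟨N, fun n hn c hc => le_trans (hN n hn c hc) hk.le⟩

end Aux

/-- For an i.i.d. sample `(Y_{1,i}, Y_{2,i})` of copies of `(Y1, Y2)` with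
continuous margins `F1`, `F2` (strictly increasing on `(0,∞)`, vanishing at `0`), the
estimator `D_n(c) = (1/(2n)) Σᵢ |F2(c·Y_{1,i}) − F1(Y_{2,i}/c)|` of the RFA-madogram
satisfies `sup_{c>0} |D_n(c) − D(c)| → 0` almost surely. -/
theorem rfa_madogram_estimator_uniform_strong_consistency
    {Ω : Type*} [MeasurableSpace Ω] (μ : Measure Ω) [IsProbabilityMeasure μ]
    (Y1 Y2 : Ω → ℝ) (hY1meas : Measurable Y1) (hY2meas : Measurable Y2)
    (hY1pos : ∀ ω, 0 < Y1 ω) (hY2pos : ∀ ω, 0 < Y2 ω)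
    (F1 F2 : ℝ → ℝ)
    (hF1 : ∀ x, F1 x = (μ {ω | Y1 ω ≤ x}).toReal)
    (hF2 : ∀ x, F2 x = (μ {ω | Y2 ω ≤ x}).toReal)
    (hF1cont : Continuous F1) (hF2cont : Continuous F2)
    (hF1mono : StrictMonoOn F1 (Set.Ioi 0)) (hF2mono : StrictMonoOn F2 (Set.Ioi 0))
    (hF10 : F1 0 = 0) (hF20 : F2 0 = 0)
    (Y : ℕ → Ω → ℝ × ℝ) (hYmeas : ∀ i, Measurable (Y i))
    (hindep : iIndepFun Y μ)
    (hident : ∀ i, IdentDistrib (Y i) (fun ω => (Y1 ω, Y2 ω)) μ μ) :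
    ∀ᵐ ω ∂μ, Tendsto
      (fun n : ℕ => ⨆ c : {c : ℝ // 0 < c},
        |(1 / (2 * (n : ℝ))) *
            ∑ i ∈ Finset.range n, |F2 (c.1 * (Y i ω).1) - F1 ((Y i ω).2 / c.1)|
          - (1 / 2) * ∫ ω', |F2 (c.1 * Y1 ω') - F1 (Y2 ω' / c.1)| ∂μ|)
      atTop (nhds 0) := by
  -- Basic facts about the margins
  have hmono1 : Monotone F1 := by
    intro x y hxy
    rw [hF1, hF1]
    exact ENNReal.toReal_mono (measure_ne_top μ _)
      (measure_mono (Set.setOf_subset_setOf.mpr fun ω h => le_trans h hxy))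
  have hmono2 : Monotone F2 := by
    intro x y hxy
    rw [hF2, hF2]
    exact ENNReal.toReal_mono (measure_ne_top μ _)
      (measure_mono (Set.setOf_subset_setOf.mpr fun ω h => le_trans h hxy))
  have h1nonneg : ∀ x, 0 ≤ F1 x := fun x => by rw [hF1]; exact ENNReal.toReal_nonneg
  have h2nonneg : ∀ x, 0 ≤ F2 x := fun x => by rw [hF2]; exact ENNReal.toReal_nonneg
  have h1le1 : ∀ x, F1 x ≤ 1 := fun x => by
    rw [hF1]
    calc (μ {ω | Y1 ω ≤ x}).toReal ≤ (1 : ℝ≥0∞).toReal :=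
          ENNReal.toReal_mono ENNReal.one_ne_top prob_le_one
    _ = 1 := by simp
  have h2le1 : ∀ x, F2 x ≤ 1 := fun x => by
    rw [hF2]
    calc (μ {ω | Y2 ω ≤ x}).toReal ≤ (1 : ℝ≥0∞).toReal :=
          ENNReal.toReal_mono ENNReal.one_ne_top prob_le_one
    _ = 1 := by simp
  have h1zero : ∀ x ≤ (0:ℝ), F1 x = 0 := fun x hx =>
    le_antisymm (hF10 ▸ hmono1 hx) (h1nonneg x)
  have h2zero : ∀ x ≤ (0:ℝ), F2 x = 0 := fun x hx =>
    le_antisymm (hF20 ▸ hmono2 hx) (h2nonneg x)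
  have h1top : Tendsto F1 atTop (𝓝 1) := by
    have hmap : IsProbabilityMeasure (μ.map Y1) := Measure.isProbabilityMeasure_map hY1meas.aemeasurable
    have heq : ∀ x, F1 x = cdf (μ.map Y1) x := fun x => by
      rw [cdf_eq_real, measureReal_def, Measure.map_apply hY1meas measurableSet_Iic, hF1]
      rfl
    exact (tendsto_cdf_atTop (μ.map Y1)).congr fun x => (heq x).symm
  have h2top : Tendsto F2 atTop (𝓝 1) := by
    have hmap : IsProbabilityMeasure (μ.map Y2) := Measure.isProbabilityMeasure_map hY2meas.aemeasurable
    have heq : ∀ x, F2 x = cdf (μ.map Y2) x := fun x => by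
      rw [cdf_eq_real, measureReal_def, Measure.map_apply hY2meas measurableSet_Iic, hF2]
      rfl
    exact (tendsto_cdf_atTop (μ.map Y2)).congr fun x => (heq x).symm
  -- Facts about `hfun` and `gfun`
  have hhcont : ∀ c, Continuous (hfun F1 F2 c) := fun c =>
    (hF2cont.comp (continuous_const.mul continuous_fst)).sub
      (hF1cont.comp (continuous_snd.div_const c))
  have hg2cont : ∀ c, Continuous (gfun F1 F2 c) := fun c =>
    (((hhcont c).neg).max continuous_const).neg
  have hhbdd : ∀ c y, -1 ≤ hfun F1 F2 c y ∧ hfun F1 F2 c y ≤ 1 := by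
    intro c y
    unfold hfun
    constructor
    · have := h2nonneg (c * y.1); have := h1le1 (y.2 / c); linarith
    · have := h2le1 (c * y.1); have := h1nonneg (y.2 / c); linarith
  have hg2bdd : ∀ c y, -1 ≤ gfun F1 F2 c y ∧ gfun F1 F2 c y ≤ 0 := by
    intro c y
    obtain ⟨hb1, hb2⟩ := hhbdd c y
    unfold gfun
    constructor
    · have : max (-(hfun F1 F2 c y)) 0 ≤ 1 := max_le (by linarith) (by norm_num)
      linarith
    · have := le_max_right (-(hfun F1 F2 c y)) (0:ℝ)
      linarith
  have hhmono : ∀ (y : ℝ × ℝ) (c d : ℝ), 0 < c → c ≤ d →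
      hfun F1 F2 c y ≤ hfun F1 F2 d y := by
    intro y c d hc hcd
    have hd : 0 < d := lt_of_lt_of_le hc hcd
    unfold hfun
    have hF2le : F2 (c * y.1) ≤ F2 (d * y.1) := by
      rcases le_or_gt 0 y.1 with hy | hy
      · exact hmono2 (mul_le_mul_of_nonneg_right hcd hy)
      · rw [h2zero _ (by nlinarith), h2zero _ (by nlinarith)]
    have hF1ge : F1 (y.2 / d) ≤ F1 (y.2 / c) := by
      rcases le_or_gt 0 y.2 with hy | hy
      · apply hmono1
        rw [div_le_div_iff₀ hd hc]
        nlinarith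
      · rw [h1zero _ (div_nonpos_of_nonpos_of_nonneg hy.le hc.le),
            h1zero _ (div_nonpos_of_nonpos_of_nonneg hy.le hd.le)]
    linarith
  have hg2mono : ∀ (y : ℝ × ℝ) (c d : ℝ), 0 < c → c ≤ d →
      gfun F1 F2 c y ≤ gfun F1 F2 d y := by
    intro y c d hc hcd
    have h1 := hhmono y c d hc hcd
    unfold gfun
    have : max (-(hfun F1 F2 d y)) 0 ≤ max (-(hfun F1 F2 c y)) 0 :=
      max_le_max (neg_le_neg h1) le_rfl
    linarith
  -- the pair map
  have pairmeas : Measurable (fun ω => (Y1 ω, Y2 ω)) := hY1meas.prodMk hY2meas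
  have hinth : ∀ c, Integrable (fun ω => hfun F1 F2 c (Y1 ω, Y2 ω)) μ := fun c =>
    Integrable.mono' (integrable_const 1)
      (((hhcont c).measurable.comp pairmeas).aestronglyMeasurable)
      (Filter.Eventually.of_forall fun ω => by
        rw [Real.norm_eq_abs]
        exact abs_le.2 ⟨(hhbdd c _).1, (hhbdd c _).2⟩)
  have hintg2 : ∀ c, Integrable (fun ω => gfun F1 F2 c (Y1 ω, Y2 ω)) μ := fun c =>
    Integrable.mono' (integrable_const 1)
      (((hg2cont c).measurable.comp pairmeas).aestronglyMeasurable)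
      (Filter.Eventually.of_forall fun ω => by
        rw [Real.norm_eq_abs]
        exact abs_le.2 ⟨(hg2bdd c _).1, by linarith [(hg2bdd c (Y1 ω, Y2 ω)).2]⟩)
  -- the limit functions
  set m1 : ℝ → ℝ := fun c => ∫ ω, hfun F1 F2 c (Y1 ω, Y2 ω) ∂μ with hm1def
  set m2 : ℝ → ℝ := fun c => ∫ ω, gfun F1 F2 c (Y1 ω, Y2 ω) ∂μ with hm2def
  have hmAbs : ∀ c : ℝ, (∫ ω', |F2 (c * Y1 ω') - F1 (Y2 ω' / c)| ∂μ) = m1 c - 2 * m2 c := by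
    intro c
    have heq : (fun ω' => |F2 (c * Y1 ω') - F1 (Y2 ω' / c)|)
        = fun ω' => hfun F1 F2 c (Y1 ω', Y2 ω') - 2 * gfun F1 F2 c (Y1 ω', Y2 ω') :=
      funext fun ω' => habs_eq F1 F2 c (Y1 ω', Y2 ω')
    rw [heq, integral_sub (hinth c) ((hintg2 c).const_mul 2), integral_const_mul]
  -- continuity of the limit functions on `(0, ∞)`
  have hm1cont : ∀ c : ℝ, 0 < c → ContinuousAt m1 c := by
    intro c hc
    rw [hm1def]
    apply continuousAt_of_dominated (bound := fun _ => (1:ℝ))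
    · exact Eventually.of_forall fun c' =>
        (((hhcont c').measurable.comp pairmeas).aestronglyMeasurable)
    · exact Eventually.of_forall fun c' => Eventually.of_forall fun ω => by
        rw [Real.norm_eq_abs]
        exact abs_le.2 ⟨(hhbdd c' _).1, (hhbdd c' _).2⟩
    · exact integrable_const 1
    · refine Eventually.of_forall fun ω => ?_
      have hcont1 : ContinuousAt (fun c' : ℝ => F2 (c' * Y1 ω)) c :=
        hF2cont.continuousAt.comp ((continuous_id.mul continuous_const).continuousAt)
      have hcont2 : ContinuousAt (fun c' : ℝ => F1 (Y2 ω / c')) c :=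
        hF1cont.continuousAt.comp
          (ContinuousAt.div continuousAt_const continuousAt_id (ne_of_gt hc))
      exact hcont1.sub hcont2
  have hm2cont : ∀ c : ℝ, 0 < c → ContinuousAt m2 c := by
    intro c hc
    rw [hm2def]
    apply continuousAt_of_dominated (bound := fun _ => (1:ℝ))
    · exact Eventually.of_forall fun c' =>
        (((hg2cont c').measurable.comp pairmeas).aestronglyMeasurable)
    · exact Eventually.of_forall fun c' => Eventually.of_forall fun ω => by
        rw [Real.norm_eq_abs]
        exact abs_le.2 ⟨(hg2bdd c' _).1, by linarith [(hg2bdd c' (Y1 ω, Y2 ω)).2]⟩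
    · exact integrable_const 1
    · refine Eventually.of_forall fun ω => ?_
      have hcont1 : ContinuousAt (fun c' : ℝ => F2 (c' * Y1 ω)) c :=
        hF2cont.continuousAt.comp ((continuous_id.mul continuous_const).continuousAt)
      have hcont2 : ContinuousAt (fun c' : ℝ => F1 (Y2 ω / c')) c :=
        hF1cont.continuousAt.comp
          (ContinuousAt.div continuousAt_const continuousAt_id (ne_of_gt hc))
      exact ((hcont1.sub hcont2).neg.max continuousAt_const).neg
  -- pointwise limits
  have hpt0 : ∀ ω : Ω, Tendsto (fun c => hfun F1 F2 c (Y1 ω, Y2 ω)) (𝓝[>] (0:ℝ)) (𝓝 (-1)) := by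
    intro ω
    have t1 : Tendsto (fun c : ℝ => c * Y1 ω) (𝓝[>] 0) (𝓝 0) := by
      have h := ((continuous_id.mul (continuous_const : Continuous fun _ : ℝ => Y1 ω)).tendsto
        (0:ℝ)).mono_left (nhdsWithin_le_nhds (s := Set.Ioi (0:ℝ)))
      simpa only [Pi.mul_def, id, zero_mul] using h
    have tF2 : Tendsto (fun c : ℝ => F2 (c * Y1 ω)) (𝓝[>] 0) (𝓝 0) := by
      have := (hF2cont.tendsto 0).comp t1
      rwa [hF20] at this
    have t2 : Tendsto (fun c : ℝ => Y2 ω / c) (𝓝[>] (0:ℝ)) atTop := by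
      have := Tendsto.const_mul_atTop (hY2pos ω) (tendsto_inv_nhdsGT_zero (𝕜 := ℝ))
      simpa [div_eq_mul_inv] using this
    have tF1 : Tendsto (fun c : ℝ => F1 (Y2 ω / c)) (𝓝[>] (0:ℝ)) (𝓝 1) := h1top.comp t2
    have := tF2.sub tF1
    simpa [hfun] using this
  have hpttop : ∀ ω : Ω, Tendsto (fun c => hfun F1 F2 c (Y1 ω, Y2 ω)) atTop (𝓝 1) := by
    intro ω
    have t1 : Tendsto (fun c : ℝ => c * Y1 ω) atTop atTop :=
      Tendsto.atTop_mul_const (hY1pos ω) tendsto_id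
    have tF2 : Tendsto (fun c : ℝ => F2 (c * Y1 ω)) atTop (𝓝 1) := h2top.comp t1
    have t2 : Tendsto (fun c : ℝ => Y2 ω / c) atTop (𝓝 0) := by
      have : Tendsto (fun c : ℝ => Y2 ω * c⁻¹) atTop (𝓝 (Y2 ω * 0)) :=
        tendsto_const_nhds.mul tendsto_inv_atTop_zero
      simpa [div_eq_mul_inv] using this
    have tF1 : Tendsto (fun c : ℝ => F1 (Y2 ω / c)) atTop (𝓝 0) := by
      have := (hF1cont.tendsto 0).comp t2
      rwa [hF10] at this
    have := tF2.sub tF1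
    simpa [hfun] using this
  have hphi : Continuous (fun x : ℝ => -(max (-x) 0)) :=
    (continuous_neg.max continuous_const).neg
  have hptg0 : ∀ ω : Ω, Tendsto (fun c => gfun F1 F2 c (Y1 ω, Y2 ω)) (𝓝[>] (0:ℝ)) (𝓝 (-1)) := by
    intro ω
    have := (hphi.tendsto (-1)).comp (hpt0 ω)
    simpa [gfun, Function.comp_def] using this
  have hptgtop : ∀ ω : Ω, Tendsto (fun c => gfun F1 F2 c (Y1 ω, Y2 ω)) atTop (𝓝 0) := by
    intro ω
    have := (hphi.tendsto 1).comp (hpttop ω)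
    have h10 : -(max (-(1:ℝ)) 0) = 0 := by norm_num
    simpa [gfun, Function.comp_def, h10] using this
  -- limits of m1, m2 by dominated convergence
  have hm1lim0 : Tendsto m1 (𝓝[>] (0:ℝ)) (𝓝 (-1)) := by
    have hlim := tendsto_integral_filter_of_dominated_convergence (μ := μ)
      (l := 𝓝[>] (0:ℝ)) (F := fun c ω => hfun F1 F2 c (Y1 ω, Y2 ω))
      (f := fun _ : Ω => (-1 : ℝ)) (fun _ : Ω => (1:ℝ))
      (Eventually.of_forall fun c =>
        (((hhcont c).measurable.comp pairmeas).aestronglyMeasurable))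
      (Eventually.of_forall fun c => Eventually.of_forall fun ω => by
        rw [Real.norm_eq_abs]
        exact abs_le.2 ⟨(hhbdd c _).1, (hhbdd c _).2⟩)
      (integrable_const 1)
      (Eventually.of_forall fun ω => hpt0 ω)
    simpa [hm1def] using hlim
  have hm1limtop : Tendsto m1 atTop (𝓝 1) := by
    have hlim := tendsto_integral_filter_of_dominated_convergence (μ := μ)
      (l := atTop) (F := fun c ω => hfun F1 F2 c (Y1 ω, Y2 ω))
      (f := fun _ : Ω => (1 : ℝ)) (fun _ : Ω => (1:ℝ))
      (Eventually.of_forall fun c =>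
        (((hhcont c).measurable.comp pairmeas).aestronglyMeasurable))
      (Eventually.of_forall fun c => Eventually.of_forall fun ω => by
        rw [Real.norm_eq_abs]
        exact abs_le.2 ⟨(hhbdd c _).1, (hhbdd c _).2⟩)
      (integrable_const 1)
      (Eventually.of_forall fun ω => hpttop ω)
    simpa [hm1def] using hlim
  have hm2lim0 : Tendsto m2 (𝓝[>] (0:ℝ)) (𝓝 (-1)) := by
    have hlim := tendsto_integral_filter_of_dominated_convergence (μ := μ)
      (l := 𝓝[>] (0:ℝ)) (F := fun c ω => gfun F1 F2 c (Y1 ω, Y2 ω))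
      (f := fun _ : Ω => (-1 : ℝ)) (fun _ : Ω => (1:ℝ))
      (Eventually.of_forall fun c =>
        (((hg2cont c).measurable.comp pairmeas).aestronglyMeasurable))
      (Eventually.of_forall fun c => Eventually.of_forall fun ω => by
        show ‖gfun F1 F2 c (Y1 ω, Y2 ω)‖ ≤ 1
        rw [Real.norm_eq_abs]
        exact abs_le.2 ⟨(hg2bdd c _).1, le_trans (hg2bdd c _).2 zero_le_one⟩)
      (integrable_const 1)
      (Eventually.of_forall fun ω => hptg0 ω)
    simpa [hm2def] using hlim
  have hm2limtop : Tendsto m2 atTop (𝓝 0) := by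
    have hlim := tendsto_integral_filter_of_dominated_convergence (μ := μ)
      (l := atTop) (F := fun c ω => gfun F1 F2 c (Y1 ω, Y2 ω))
      (f := fun _ : Ω => (0 : ℝ)) (fun _ : Ω => (1:ℝ))
      (Eventually.of_forall fun c =>
        (((hg2cont c).measurable.comp pairmeas).aestronglyMeasurable))
      (Eventually.of_forall fun c => Eventually.of_forall fun ω => by
        show ‖gfun F1 F2 c (Y1 ω, Y2 ω)‖ ≤ 1
        rw [Real.norm_eq_abs]
        exact abs_le.2 ⟨(hg2bdd c _).1, le_trans (hg2bdd c _).2 zero_le_one⟩)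
      (integrable_const 1)
      (Eventually.of_forall fun ω => hptgtop ω)
    simpa [hm2def] using hlim
  -- identification of m1, m2 with the expectations over `Y 0`
  have hidentZ : ∀ i, IdentDistrib (Y i) (Y 0) μ μ := fun i =>
    (hident i).trans (hident 0).symm
  have hmeq1 : ∀ c : ℝ, m1 c = ∫ ω, hfun F1 F2 c (Y 0 ω) ∂μ := by
    intro c
    rw [hm1def]
    have := ((hident 0).comp (hhcont c).measurable).integral_eq
    simpa [Function.comp] using this.symm
  have hmeq2 : ∀ c : ℝ, m2 c = ∫ ω, gfun F1 F2 c (Y 0 ω) ∂μ := by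
    intro c
    rw [hm2def]
    have := ((hident 0).comp (hg2cont c).measurable).integral_eq
    simpa [Function.comp] using this.symm
  -- apply the uniform SLLN twice
  have E1 := polya_unif Y hYmeas hindep hidentZ (hfun F1 F2) (-1) 1
    (fun c => (hhcont c).measurable) hhbdd hhmono m1 hmeq1 hm1cont hm1lim0 hm1limtop
  have E2 := polya_unif Y hYmeas hindep hidentZ (gfun F1 F2) (-1) 0
    (fun c => (hg2cont c).measurable) hg2bdd hg2mono m2 hmeq2 hm2cont hm2lim0 hm2limtop
  filter_upwards [E1, E2] with ω H1 H2
  rw [Metric.tendsto_atTop]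
  intro ε hε
  obtain ⟨N1, hN1⟩ := H1 (ε/3) (by linarith)
  obtain ⟨N2, hN2⟩ := H2 (ε/3) (by linarith)
  refine ⟨max N1 N2, fun n hn => ?_⟩
  have key : ∀ c : ℝ, 0 < c →
      |(1 / (2 * (n : ℝ))) *
          ∑ i ∈ Finset.range n, |F2 (c * (Y i ω).1) - F1 ((Y i ω).2 / c)|
        - (1 / 2) * ∫ ω', |F2 (c * Y1 ω') - F1 (Y2 ω' / c)| ∂μ| ≤ ε/2 := by
    intro c hc
    have k1 := hN1 n (le_trans (le_max_left _ _) hn) c hc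
    have k2 := hN2 n (le_trans (le_max_right _ _) hn) c hc
    have hsum : (∑ i ∈ Finset.range n, |F2 (c * (Y i ω).1) - F1 ((Y i ω).2 / c)|)
        = (∑ i ∈ Finset.range n, hfun F1 F2 c (Y i ω))
          - 2 * ∑ i ∈ Finset.range n, gfun F1 F2 c (Y i ω) := by
      rw [Finset.mul_sum, ← Finset.sum_sub_distrib]
      exact Finset.sum_congr rfl fun i _ => habs_eq F1 F2 c (Y i ω)
    have heq : (1 / (2 * (n : ℝ))) *
          (∑ i ∈ Finset.range n, |F2 (c * (Y i ω).1) - F1 ((Y i ω).2 / c)|)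
        - (1 / 2) * ∫ ω', |F2 (c * Y1 ω') - F1 (Y2 ω' / c)| ∂μ
        = (1/2) * ((∑ i ∈ Finset.range n, hfun F1 F2 c (Y i ω)) / n - m1 c)
          - ((∑ i ∈ Finset.range n, gfun F1 F2 c (Y i ω)) / n - m2 c) := by
      rw [hmAbs c, hsum]
      simp only [div_eq_mul_inv, mul_inv, one_mul]
      ring
    rw [heq]
    set A := (∑ i ∈ Finset.range n, hfun F1 F2 c (Y i ω)) / n - m1 c with hA
    set B := (∑ i ∈ Finset.range n, gfun F1 F2 c (Y i ω)) / n - m2 c with hB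
    have htri : |(1/2) * A - B| ≤ |(1/2) * A| + |B| := by
      rw [sub_eq_add_neg]
      exact (abs_add_le _ _).trans (by rw [abs_neg])
    have habsA : |(1/2 : ℝ) * A| = (1/2) * |A| := by
      rw [abs_mul, abs_of_pos (by norm_num : (0:ℝ) < 1/2)]
    calc |(1/2) * A - B| ≤ |(1/2) * A| + |B| := htri
    _ = (1/2) * |A| + |B| := by rw [habsA]
    _ ≤ (1/2) * (ε/3) + ε/3 := by
        have := abs_nonneg A
        gcongr
    _ ≤ ε/2 := by linarith
  rw [Real.dist_eq, sub_zero]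
  have hnonneg : 0 ≤ ⨆ c : {c : ℝ // 0 < c},
      |(1 / (2 * (n : ℝ))) *
          ∑ i ∈ Finset.range n, |F2 (c.1 * (Y i ω).1) - F1 ((Y i ω).2 / c.1)|
        - (1 / 2) * ∫ ω', |F2 (c.1 * Y1 ω') - F1 (Y2 ω' / c.1)| ∂μ| :=
    Real.iSup_nonneg fun c => abs_nonneg _
  rw [abs_of_nonneg hnonneg]
  have hle : (⨆ c : {c : ℝ // 0 < c},
      |(1 / (2 * (n : ℝ))) *
          ∑ i ∈ Finset.range n, |F2 (c.1 * (Y i ω).1) - F1 ((Y i ω).2 / c.1)|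
        - (1 / 2) * ∫ ω', |F2 (c.1 * Y1 ω') - F1 (Y2 ω' / c.1)| ∂μ|) ≤ ε/2 :=
    Real.iSup_le (fun c => key c.1 c.2) (by linarith)
  linarith
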